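/- Let R ⊆ S be a ring extension with the same unity and let Θ : G → S_R(S) be a unital partial representation into the monoid of R-subbimodules of S, with Θ_x Θ_{x⁻¹} = R1_x. Then for every x ∈ G the class [Θ_x] lies in PicS(R): Θ_x is finitely generated projective as a left and as a right R-module, and the canonical maps R → End(Θ_x as right R-module) (left multiplication) and R → End(Θ_x as left R-module) (right multiplication) are surjective. -/

import Mathlib

noncomputable section

open MulOpposite

universe u v

/-- The product `MN = { ∑ mᵢnᵢ }` of two additive subgroups of a ring `S`, i.e. the
multiplication of the monoid `S_R(S)` of `R`-subbimodules of `S`. -/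
def sMul {S : Type u} [Ring S] (A B : AddSubgroup S) : AddSubgroup S :=
  AddSubgroup.closure {z : S | ∃ a ∈ A, ∃ b ∈ B, z = a * b}

namespace Stmt18Aux

variable {S : Type*} [Ring S]

lemma mul_mem_sMul {A B : AddSubgroup S} {a b : S} (ha : a ∈ A) (hb : b ∈ B) :
    a * b ∈ sMul A B :=
  AddSubgroup.subset_closure ⟨a, ha, b, hb, rfl⟩

lemma sMul_le {A B C : AddSubgroup S}
    (h : ∀ a ∈ A, ∀ b ∈ B, a * b ∈ C) : sMul A B ≤ C := by
  apply (AddSubgroup.closure_le _).mpr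
  rintro z ⟨a, ha, b, hb, rfl⟩
  exact h a ha b hb

lemma sMul_assoc (A B C : AddSubgroup S) : sMul (sMul A B) C = sMul A (sMul B C) := by
  apply le_antisymm
  · apply sMul_le
    intro p hp c hc
    induction hp using AddSubgroup.closure_induction with
    | mem z hz =>
      obtain ⟨a, ha, b, hb, rfl⟩ := hz
      rw [mul_assoc]
      exact mul_mem_sMul ha (mul_mem_sMul hb hc)
    | zero => simpa using (sMul A (sMul B C)).zero_mem
    | add p q _ _ hp hq => rw [add_mul]; exact add_mem hp hq
    | neg p _ hp => rw [neg_mul]; exact neg_mem hp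
  · apply sMul_le
    intro a ha p hp
    induction hp using AddSubgroup.closure_induction with
    | mem z hz =>
      obtain ⟨b, hb, c, hc, rfl⟩ := hz
      rw [← mul_assoc]
      exact mul_mem_sMul (mul_mem_sMul ha hb) hc
    | zero => simpa using (sMul (sMul A B) C).zero_mem
    | add p q _ _ hp hq => rw [mul_add]; exact add_mem hp hq
    | neg p _ hp => rw [mul_neg]; exact neg_mem hp

lemma neg_list_sum (l : List (S × S)) :
    (l.map fun p => (-p.1) * p.2).sum = -(l.map fun p => p.1 * p.2).sum := by
  induction l with
  | nil => simp
  | cons h t ih =>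
    simp only [List.map_cons, List.sum_cons, neg_mul, neg_add] at ih ⊢
    rw [ih]
    try abel

lemma list_sum_eq_fin (l : List (S × S)) :
    (l.map fun p => p.1 * p.2).sum = ∑ i : Fin l.length, (l.get i).1 * (l.get i).2 := by
  induction l with
  | nil => simp
  | cons h t ih => simp [Fin.sum_univ_succ, ih]

lemma exists_fin_sMul {A B : AddSubgroup S} {z : S} (hz : z ∈ sMul A B) :
    ∃ (n : ℕ) (a b : Fin n → S), (∀ i, a i ∈ A) ∧ (∀ i, b i ∈ B) ∧ z = ∑ i, a i * b i := by
  have : ∃ l : List (S × S), (∀ p ∈ l, p.1 ∈ A ∧ p.2 ∈ B) ∧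
      z = (l.map fun p => p.1 * p.2).sum := by
    induction hz using AddSubgroup.closure_induction with
    | mem w hw =>
      obtain ⟨a, ha, b, hb, rfl⟩ := hw
      exact ⟨[(a, b)], by simpa using ⟨ha, hb⟩, by simp⟩
    | zero => exact ⟨[], by simp, by simp⟩
    | add p q _ _ hp hq =>
      obtain ⟨l₁, h₁, rfl⟩ := hp
      obtain ⟨l₂, h₂, rfl⟩ := hq
      refine ⟨l₁ ++ l₂, ?_, by simp⟩
      intro p hp
      rcases List.mem_append.mp hp with h | h
      · exact h₁ p h
      · exact h₂ p h
    | neg p _ hp =>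
      obtain ⟨l, h₁, rfl⟩ := hp
      refine ⟨l.map fun p => (-p.1, p.2), ?_, ?_⟩
      · intro p hp
        obtain ⟨q, hq, rfl⟩ := List.mem_map.mp hp
        exact ⟨neg_mem (h₁ q hq).1, (h₁ q hq).2⟩
      · rw [← neg_list_sum]
        congr 1
        rw [List.map_map]
        rfl
  obtain ⟨l, hl, rfl⟩ := this
  exact ⟨l.length, fun i => (l.get i).1, fun i => (l.get i).2,
    fun i => (hl _ (l.get_mem i)).1, fun i => (hl _ (l.get_mem i)).2,
    list_sum_eq_fin l⟩


end Stmt18Aux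

open Stmt18Aux in
/-- let `R ⊆ S` be a ring extension with the same unity and let
`Θ : G → S_R(S)` be a unital partial representation into the monoid of `R`-subbimodules
of `S`, with `Θ x Θ x⁻¹ = R 1_x` for central idempotents `1_x = e x` of `R`.  Then each
`Θ x` is a partially invertible `R`-bimodule, i.e. `[Θ x] ∈ PicS(R)`:
`Θ x` is finitely generated projective as a right and as a left `R`-module (witnessed by
finite dual bases), and every right (resp. left) `R`-linear endomorphism of `Θ x` is left
(resp. right) multiplication by an element of `R`. -/
theorem statement18 (S : Type u) [Ring S] (R : Subring S) (G : Type v) [Group G]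
    (e : G → S) (he_mem : ∀ x, e x ∈ R)
    (he_central : ∀ x : G, ∀ r ∈ R, e x * r = r * e x)
    (he_idem : ∀ x, IsIdempotentElem (e x))
    (Θ : G → AddSubgroup S)
    (hΘl : ∀ x : G, ∀ r ∈ R, ∀ u ∈ Θ x, r * u ∈ Θ x)
    (hΘr : ∀ x : G, ∀ r ∈ R, ∀ u ∈ Θ x, u * r ∈ Θ x)
    (hΘ1 : Θ 1 = R.toAddSubgroup)
    (hrep1 : ∀ x y : G, sMul (sMul (Θ x) (Θ y)) (Θ y⁻¹) = sMul (Θ (x * y)) (Θ y⁻¹))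
    (hrep2 : ∀ x y : G, sMul (sMul (Θ x⁻¹) (Θ x)) (Θ y) = sMul (Θ x⁻¹) (Θ (x * y)))
    (hunital : ∀ x : G, sMul (Θ x) (Θ x⁻¹) =
      AddSubgroup.closure {z : S | ∃ r ∈ R, z = r * e x}) :
    ∀ x : G,
      -- finitely generated projective as a right `R`-module: a finite dual basis
      (∃ (n : ℕ) (u : Fin n → S) (_ : ∀ i, u i ∈ Θ x) (f : Fin n → S → S),
        (∀ i, ∀ v ∈ Θ x, f i v ∈ R) ∧
        (∀ i, ∀ v ∈ Θ x, ∀ w ∈ Θ x, f i (v + w) = f i v + f i w) ∧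
        (∀ i, ∀ v ∈ Θ x, ∀ r ∈ R, f i (v * r) = f i v * r) ∧
        (∀ v ∈ Θ x, v = ∑ i, u i * f i v)) ∧
      -- finitely generated projective as a left `R`-module: a finite dual basis
      (∃ (m : ℕ) (u : Fin m → S) (_ : ∀ j, u j ∈ Θ x) (g : Fin m → S → S),
        (∀ j, ∀ v ∈ Θ x, g j v ∈ R) ∧
        (∀ j, ∀ v ∈ Θ x, ∀ w ∈ Θ x, g j (v + w) = g j v + g j w) ∧
        (∀ j, ∀ v ∈ Θ x, ∀ r ∈ R, g j (r * v) = r * g j v) ∧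
        (∀ v ∈ Θ x, v = ∑ j, g j v * u j)) ∧
      -- `R → End(Θ x` as a right module`)` (left multiplication) is surjective
      (∀ φ : S → S, (∀ v ∈ Θ x, φ v ∈ Θ x) →
        (∀ v ∈ Θ x, ∀ w ∈ Θ x, φ (v + w) = φ v + φ w) →
        (∀ v ∈ Θ x, ∀ r ∈ R, φ (v * r) = φ v * r) →
        ∃ r ∈ R, ∀ v ∈ Θ x, φ v = r * v) ∧
      -- `R → End(Θ x` as a left module`)` (right multiplication) is surjective
      (∀ φ : S → S, (∀ v ∈ Θ x, φ v ∈ Θ x) →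
        (∀ v ∈ Θ x, ∀ w ∈ Θ x, φ (v + w) = φ v + φ w) →
        (∀ v ∈ Θ x, ∀ r ∈ R, φ (r * v) = r * φ v) →
        ∃ r ∈ R, ∀ v ∈ Θ x, φ v = v * r) := by
  intro x
  have hone1 : (1 : S) ∈ Θ 1 := by rw [hΘ1]; exact R.one_mem
  have hsmul_one_left : ∀ y : G, sMul (Θ 1) (Θ y) = Θ y := by
    intro y
    apply le_antisymm
    · apply sMul_le
      intro a ha b hb
      rw [hΘ1] at ha
      exact hΘl y a ha b hb
    · intro v hv
      simpa using mul_mem_sMul hone1 hv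
  have key1 : sMul (sMul (Θ x) (Θ x⁻¹)) (Θ x) = Θ x := by
    have h := hrep1 x x⁻¹
    rw [inv_inv, mul_inv_cancel, hsmul_one_left] at h
    exact h
  have key2 : sMul (Θ x) (sMul (Θ x⁻¹) (Θ x)) = Θ x := by
    rw [← sMul_assoc, key1]
  have hRe' : sMul (Θ x⁻¹) (Θ x) =
      AddSubgroup.closure {z : S | ∃ r ∈ R, z = r * e x⁻¹} := by
    have h := hunital x⁻¹
    rwa [inv_inv] at h
  -- products land in R
  have hprodR : ∀ a ∈ Θ x, ∀ b ∈ Θ x⁻¹, a * b ∈ R := by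
    intro a ha b hb
    have h : a * b ∈ sMul (Θ x) (Θ x⁻¹) := mul_mem_sMul ha hb
    rw [hunital x] at h
    have hle : AddSubgroup.closure {z : S | ∃ r ∈ R, z = r * e x} ≤ R.toAddSubgroup := by
      apply (AddSubgroup.closure_le _).mpr
      rintro z ⟨r, hr, rfl⟩
      exact R.mul_mem hr (he_mem x)
    exact hle h
  have hprodR' : ∀ a ∈ Θ x⁻¹, ∀ b ∈ Θ x, a * b ∈ R := by
    intro a ha b hb
    have h : a * b ∈ sMul (Θ x⁻¹) (Θ x) := mul_mem_sMul ha hb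
    rw [hRe'] at h
    have hle : AddSubgroup.closure {z : S | ∃ r ∈ R, z = r * e x⁻¹} ≤ R.toAddSubgroup := by
      apply (AddSubgroup.closure_le _).mpr
      rintro z ⟨r, hr, rfl⟩
      exact R.mul_mem hr (he_mem x⁻¹)
    exact hle h
  -- decompositions of the idempotents
  have hex : e x ∈ sMul (Θ x) (Θ x⁻¹) := by
    rw [hunital x]
    exact AddSubgroup.subset_closure ⟨1, R.one_mem, (one_mul _).symm⟩
  obtain ⟨n, u, vv, hu, hvv, hsum⟩ := exists_fin_sMul hex
  have hex' : e x⁻¹ ∈ sMul (Θ x⁻¹) (Θ x) := by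
    rw [hRe']
    exact AddSubgroup.subset_closure ⟨1, R.one_mem, (one_mul _).symm⟩
  obtain ⟨m, u', v', hu', hv', hsum'⟩ := exists_fin_sMul hex'
  -- e x acts as identity on the left of Θ x
  have hqleft : ∀ q ∈ sMul (Θ x) (Θ x⁻¹), e x * q = q := by
    intro q hq
    rw [hunital x] at hq
    induction hq using AddSubgroup.closure_induction with
    | mem z hz =>
      obtain ⟨r, hr, rfl⟩ := hz
      rw [← mul_assoc, he_central x r hr, mul_assoc, he_idem x]
    | zero => exact mul_zero _
    | add p q _ _ hp hq => rw [mul_add, hp, hq]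
    | neg p _ hp => rw [mul_neg, hp]
  have hleft : ∀ v ∈ Θ x, e x * v = v := by
    intro v hv
    rw [← key1] at hv
    induction hv using AddSubgroup.closure_induction with
    | mem z hz =>
      obtain ⟨q, hq, w, _, rfl⟩ := hz
      rw [← mul_assoc, hqleft q hq]
    | zero => exact mul_zero _
    | add p q _ _ hp hq => rw [mul_add, hp, hq]
    | neg p _ hp => rw [mul_neg, hp]
  -- e x⁻¹ acts as identity on the right of Θ x
  have hqright : ∀ q ∈ sMul (Θ x⁻¹) (Θ x), q * e x⁻¹ = q := by
    intro q hq
    rw [hRe'] at hq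
    induction hq using AddSubgroup.closure_induction with
    | mem z hz =>
      obtain ⟨r, hr, rfl⟩ := hz
      rw [mul_assoc, he_idem x⁻¹]
    | zero => exact zero_mul _
    | add p q _ _ hp hq => rw [add_mul, hp, hq]
    | neg p _ hp => rw [neg_mul, hp]
  have hright : ∀ v ∈ Θ x, v * e x⁻¹ = v := by
    intro v hv
    rw [← key2] at hv
    induction hv using AddSubgroup.closure_induction with
    | mem z hz =>
      obtain ⟨w, _, q, hq, rfl⟩ := hz
      rw [mul_assoc, hqright q hq]
    | zero => exact zero_mul _
    | add p q _ _ hp hq => rw [add_mul, hp, hq]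
    | neg p _ hp => rw [neg_mul, hp]
  -- representation formulas
  have hvrep : ∀ v ∈ Θ x, v = ∑ i, u i * (vv i * v) := by
    intro v hv
    calc v = e x * v := (hleft v hv).symm
    _ = (∑ i, u i * vv i) * v := by rw [← hsum]
    _ = ∑ i, u i * vv i * v := Finset.sum_mul _ _ _
    _ = ∑ i, u i * (vv i * v) := by simp only [mul_assoc]
  have hvrep' : ∀ v ∈ Θ x, v = ∑ j, (v * u' j) * v' j := by
    intro v hv
    calc v = v * e x⁻¹ := (hright v hv).symm
    _ = v * ∑ j, u' j * v' j := by rw [← hsum']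
    _ = ∑ j, v * (u' j * v' j) := Finset.mul_sum _ _ _
    _ = ∑ j, (v * u' j) * v' j := by simp only [mul_assoc]
  -- additivity of endomorphisms over finite sums
  have hphi_sum : ∀ (φ : S → S), (∀ v ∈ Θ x, ∀ w ∈ Θ x, φ (v + w) = φ v + φ w) →
      ∀ (k : ℕ) (w : Fin k → S), (∀ i, w i ∈ Θ x) →
        φ (∑ i, w i) = ∑ i, φ (w i) := by
    intro φ hadd k w hw
    have h0 : φ 0 = 0 := by
      have h := hadd 0 (zero_mem _) 0 (zero_mem _)
      rw [add_zero] at h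
      exact (left_eq_add.mp h)
    have : ∀ s : Finset (Fin k), φ (∑ i ∈ s, w i) = ∑ i ∈ s, φ (w i) := by
      intro s
      induction s using Finset.induction with
      | empty => simpa using h0
      | insert _ _ ha ih =>
        rw [Finset.sum_insert ha, Finset.sum_insert ha,
          hadd _ (hw _) _ (sum_mem fun i _ => hw i), ih]
    exact this Finset.univ
  refine ⟨?_, ?_, ?_, ?_⟩
  · -- right dual basis
    refine ⟨n, u, hu, fun i s => vv i * s, ?_, ?_, ?_, ?_⟩
    · intro i v hv
      exact hprodR' (vv i) (hvv i) v hv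
    · intro i v _ w _
      exact mul_add _ _ _
    · intro i v _ r _
      exact (mul_assoc _ _ _).symm
    · exact hvrep
  · -- left dual basis
    refine ⟨m, v', hv', fun j s => s * u' j, ?_, ?_, ?_, ?_⟩
    · intro j v hv
      exact hprodR v hv (u' j) (hu' j)
    · intro j v _ w _
      exact add_mul _ _ _
    · intro j v _ r _
      exact mul_assoc _ _ _
    · exact hvrep'
  · -- surjectivity onto right-module endomorphisms
    intro φ hmem hadd hlin
    refine ⟨∑ i, φ (u i) * vv i, sum_mem fun i _ => hprodR _ (hmem _ (hu i)) _ (hvv i), ?_⟩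
    intro v hv
    have hterm : ∀ i : Fin n, u i * (vv i * v) ∈ Θ x := fun i =>
      hΘr x _ (hprodR' (vv i) (hvv i) v hv) _ (hu i)
    calc φ v = φ (∑ i, u i * (vv i * v)) := by rw [← hvrep v hv]
    _ = ∑ i, φ (u i * (vv i * v)) := hphi_sum φ hadd n _ hterm
    _ = ∑ i, φ (u i) * (vv i * v) := by
        refine Finset.sum_congr rfl fun i _ => ?_
        exact hlin (u i) (hu i) _ (hprodR' (vv i) (hvv i) v hv)
    _ = ∑ i, φ (u i) * vv i * v := by simp only [mul_assoc]
    _ = (∑ i, φ (u i) * vv i) * v := (Finset.sum_mul _ _ _).symm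
  · -- surjectivity onto left-module endomorphisms
    intro φ hmem hadd hlin
    refine ⟨∑ j, u' j * φ (v' j), sum_mem fun j _ => hprodR' _ (hu' j) _ (hmem _ (hv' j)), ?_⟩
    intro v hv
    have hterm : ∀ j : Fin m, (v * u' j) * v' j ∈ Θ x := fun j =>
      hΘl x _ (hprodR v hv (u' j) (hu' j)) _ (hv' j)
    calc φ v = φ (∑ j, (v * u' j) * v' j) := by rw [← hvrep' v hv]
    _ = ∑ j, φ ((v * u' j) * v' j) := hphi_sum φ hadd m _ hterm
    _ = ∑ j, (v * u' j) * φ (v' j) := by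
        refine Finset.sum_congr rfl fun j _ => ?_
        exact hlin (v' j) (hv' j) _ (hprodR v hv (u' j) (hu' j))
    _ = ∑ j, v * (u' j * φ (v' j)) := by simp only [mul_assoc]
    _ = v * (∑ j, u' j * φ (v' j)) := (Finset.mul_sum _ _ _).symm
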